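/- Every flat ancestral order frame (W,<) is isomorphic to an ω-sequence frame: the map sending each w ∈ W to its successor-sequence α_w is injective on each R(w)-class of interest and satisfies, for all w,u,x,y ∈ W: u ∈ R(w) iff α_u is a tail of α_w, and x <_w y iff the rank of the first occurrence of x in α_w is less than the rank of the first occurrence of y in α_w; hence {α_w : w ∈ W} with the tail order function is an ω-sequence frame isomorphic to (W,<). -/
import Mathlib


/-- Sentences of the language L: atoms p₀,p₁,…, negation, conjunction, and the
binary conditional `>` (written `cond`). -/
inductive Formula : Type
  | atom : ℕ → Formula
  | neg : Formula → Formula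
  | conj : Formula → Formula → Formula
  | cond : Formula → Formula → Formula
  deriving DecidableEq

namespace Formula

/-- Material implication, defined as usual: p → q := ¬(p ∧ ¬q). -/
def impl (p q : Formula) : Formula := (p.conj q.neg).neg
/-- Disjunction, defined as usual: p ∨ q := ¬(¬p ∧ ¬q). -/
def disj (p q : Formula) : Formula := (p.neg.conj q.neg).neg
/-- Material biconditional, defined as usual. -/
def biimp (p q : Formula) : Formula := (p.impl q).conj (q.impl p)
/-- □p abbreviates ¬p > p. -/
def box (p : Formula) : Formula := p.neg.cond p
/-- ◇p abbreviates ¬□¬p. -/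
def dia (p : Formula) : Formula := p.neg.box.neg
/-- ⊥ abbreviates p₀ ∧ ¬p₀. -/
def bot : Formula := (atom 0).conj (atom 0).neg

end Formula

/-- An order frame: a nonempty type of worlds `W` together with, for each world
`w`, a strict well-order `lt w` (writing `lt w x y` for `x <_w y`) of a subset of
`W` (the field of `lt w`: the relation is transitive, well-founded, and connected
on its field), such that `x <_w y` implies `w = x` or `w <_w x`. -/
structure OrderFrame (W : Type) : Type where
  nonempty : Nonempty W
  lt : W → W → W → Prop
  trans : ∀ w x y z, lt w x y → lt w y z → lt w x z
  wf : ∀ w, WellFounded (lt w)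
  connected : ∀ w x y, (∃ z, lt w x z ∨ lt w z x) → (∃ z, lt w y z ∨ lt w z y) →
      x ≠ y → lt w x y ∨ lt w y x
  center : ∀ w x y, lt w x y → x = w ∨ lt w w x

namespace OrderFrame

variable {W : Type}

/-- Accessibility: `v ∈ R(w)` where `R(w) = {w} ∪ {v : w <_w v}`. -/
def acc (F : OrderFrame W) (w v : W) : Prop := v = w ∨ F.lt w w v

/-- `x ≤_w y` iff `x, y ∈ R(w)` and not `y <_w x`. -/
def wkle (F : OrderFrame W) (w x y : W) : Prop :=
  F.acc w x ∧ F.acc w y ∧ ¬ F.lt w y x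

end OrderFrame

/-- Truth at a world of an order model: atoms via the valuation `V`, Booleans
classically, and `p > q` is true at `w` iff either no world in `R(w)` satisfies `p`,
or there is `y ∈ R(w)` satisfying `p ∧ q` such that no `x <_w y` satisfies `p`. -/
def Truth {W : Type} (F : OrderFrame W) (V : ℕ → Set W) : Formula → W → Prop
  | .atom n, w => w ∈ V n
  | .neg p, w => ¬ Truth F V p w
  | .conj p q, w => Truth F V p w ∧ Truth F V q w
  | .cond p q, w =>
      (∀ v, F.acc w v → ¬ Truth F V p v) ∨
      ∃ y, F.acc w y ∧ Truth F V p y ∧ Truth F V q y ∧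
        ∀ x, F.lt w x y → ¬ Truth F V p x

/-- A frame is semi-flat iff for all w,x,y,z: if x <_w y and (y ≤_w z or
z ∈ R(x)\R(w)), then y ≤_x z. -/
def SemiFlat {W : Type} (F : OrderFrame W) : Prop :=
  ∀ w x y z, F.lt w x y →
    (F.wkle w y z ∨ (F.acc x z ∧ ¬ F.acc w z)) → F.wkle x y z

/-- The accessibility relation of the frame is transitive. -/
def TransAcc {W : Type} (F : OrderFrame W) : Prop :=
  ∀ w u v, F.acc w u → F.acc u v → F.acc w v

/-- A frame is flat iff it is semi-flat and its accessibility relation is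
transitive. -/
def Flat {W : Type} (F : OrderFrame W) : Prop := SemiFlat F ∧ TransAcc F

/-- `v` is the successor of `w`: `v = w` if `R(w) = {w}`, and otherwise `v` is the
`<_w`-least element of `R(w) \ {w}`. -/
def OrderFrame.SuccRel {W : Type} (F : OrderFrame W) (w v : W) : Prop :=
  ((∀ u, F.acc w u → u = w) ∧ v = w) ∨
  (F.lt w w v ∧ ∀ u, F.lt w w u → u = v ∨ F.lt w v u)

/-- A frame is ancestral iff every world accessible from `w` can be obtained from
`w` by finitely many successor steps. -/
def Ancestral {W : Type} (F : OrderFrame W) : Prop :=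
  ∀ w v, F.acc w v → Relation.ReflTransGen F.SuccRel w v

/-- The `n`-th tail of an ω-sequence: σ[n:](m) = σ(n+m). -/
def seqTail {P : Type} (σ : ℕ → P) (n : ℕ) : ℕ → P := fun m => σ (n + m)

/-- The tail order on ω-sequences: τ ≺_σ ρ iff τ and ρ are tails of σ and the rank
(least index of occurrence as a tail) of τ in σ is less than that of ρ. -/
def TailLt {P : Type} (σ τ ρ : ℕ → P) : Prop :=
  ∃ m n : ℕ, IsLeast {k | seqTail σ k = τ} m ∧ IsLeast {k | seqTail σ k = ρ} n ∧
    m < n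

/-- The successor-sequence α_w of `w` relative to a successor function `s`: the
ω-sequence starting with `w` in which each element after the first is the successor
of the previous one. -/
def alphaSeq {W : Type} (s : W → W) (w : W) : ℕ → W := fun n => s^[n] w

section AuxLemmas

variable {W : Type} (F : OrderFrame W)

private lemma flt_irrefl (w x : W) : ¬ F.lt w x x := by
  induction x using (F.wf w).induction with
  | _ a ih => exact fun h => ih a h h

private lemma flt_asymm {w x y : W} (h : F.lt w x y) : ¬ F.lt w y x :=
  fun h' => flt_irrefl F w x (F.trans w x y x h h')

private lemma acc_of_lt_left {w x y : W} (h : F.lt w x y) : F.acc w x := by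
  rcases F.center w x y h with h1 | h1
  · exact Or.inl h1
  · exact Or.inr h1

private lemma acc_of_lt_right {w x y : W} (h : F.lt w x y) : F.acc w y := by
  rcases F.center w x y h with rfl | h1
  · exact Or.inr h
  · exact Or.inr (F.trans w w x y h1 h)

private lemma not_lt_base (w x : W) : ¬ F.lt w x w := by
  intro h
  rcases F.center w x w h with h1 | h1
  · rw [h1] at h
    exact flt_irrefl F w w h
  · exact flt_irrefl F w w (F.trans w w x w h1 h)

private lemma ftotal {w x y : W} (hx : F.acc w x) (hy : F.acc w y) (hne : x ≠ y) :
    F.lt w x y ∨ F.lt w y x := by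
  rcases hx with rfl | hx
  · rcases hy with rfl | hy
    · exact absurd rfl hne
    · exact Or.inl hy
  · rcases hy with rfl | hy
    · exact Or.inr hx
    · exact F.connected w x y ⟨w, Or.inr hx⟩ ⟨w, Or.inr hy⟩ hne

private lemma succ_unique {w u v : W} (h1 : F.SuccRel w u) (h2 : F.SuccRel w v) :
    u = v := by
  rcases h1 with ⟨ha, rfl⟩ | ⟨hl, hle⟩
  · rcases h2 with ⟨_, rfl⟩ | ⟨hl, _⟩
    · rfl
    · have hvw := ha v (Or.inr hl)
      rw [hvw] at hl
      exact absurd hl (flt_irrefl F _ _)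
  · rcases h2 with ⟨ha, rfl⟩ | ⟨hl2, hle2⟩
    · have huw := ha u (Or.inr hl)
      rw [huw] at hl
      exact absurd hl (flt_irrefl F _ _)
    · by_contra hne
      rcases hle v hl2 with h | h
      · exact hne h.symm
      rcases hle2 u hl with h' | h'
      · exact hne h'
      · exact flt_irrefl F w u (F.trans w u v u h h')

variable {s : W → W}

private lemma acc_succ (hs : ∀ w, F.SuccRel w (s w)) (w : W) : F.acc w (s w) := by
  rcases hs w with ⟨_, h⟩ | ⟨h, _⟩
  · exact Or.inl h
  · exact Or.inr h

private lemma alpha_succ (w : W) (n : ℕ) :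
    alphaSeq s w (n + 1) = s (alphaSeq s w n) := Function.iterate_succ_apply' s n w

private lemma acc_alpha (hs : ∀ w, F.SuccRel w (s w)) (ht : TransAcc F)
    (w : W) (n : ℕ) : F.acc w (alphaSeq s w n) := by
  induction n with
  | zero => exact Or.inl rfl
  | succ n ih =>
    rw [alpha_succ]
    exact ht w _ _ ih (acc_succ F hs _)

private lemma acc_iff_alpha (hs : ∀ w, F.SuccRel w (s w)) (ht : TransAcc F)
    (hanc : Ancestral F) (w u : W) :
    F.acc w u ↔ ∃ n, u = alphaSeq s w n := by
  constructor
  · intro h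
    have hr := hanc w u h
    clear h
    induction hr with
    | refl => exact ⟨0, rfl⟩
    | tail hab hbc ih =>
      obtain ⟨n, rfl⟩ := ih
      refine ⟨n + 1, ?_⟩
      rw [alpha_succ]
      exact succ_unique F hbc (hs _)
  · rintro ⟨n, rfl⟩
    exact acc_alpha F hs ht w n

private lemma occ_before (hs : ∀ w, F.SuccRel w (s w)) (hsf : SemiFlat F)
    (ht : TransAcc F) (w : W) :
    ∀ n z, F.lt w z (alphaSeq s w n) → ∃ m, m < n ∧ alphaSeq s w m = z := by
  intro n
  induction n with
  | zero => exact fun z h => absurd h (not_lt_base F w z)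
  | succ n ih =>
    intro z hz
    rw [alpha_succ] at hz
    set v := alphaSeq s w n with hv
    rcases hs v with ⟨_, hsv⟩ | ⟨hlt, hle⟩
    · rw [hsv] at hz
      obtain ⟨m, hm, he⟩ := ih z hz
      exact ⟨m, Nat.lt_succ_of_lt hm, he⟩
    · by_cases hzv : z = v
      · exact ⟨n, Nat.lt_succ_self n, hzv.symm⟩
      by_cases hzv2 : F.lt w z v
      · obtain ⟨m, hm, he⟩ := ih z hzv2
        exact ⟨m, Nat.lt_succ_of_lt hm, he⟩
      exfalso
      have haccv : F.acc w v := acc_alpha F hs ht w n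
      have haccz : F.acc w z := acc_of_lt_left F hz
      have hvz : F.lt w v z := (ftotal F haccz haccv hzv).resolve_left hzv2
      -- z ∈ R(v)
      have haccvz : F.acc v z :=
        (hsf w v z z hvz (Or.inl ⟨acc_of_lt_right F hvz, acc_of_lt_right F hvz,
          flt_irrefl F w z⟩)).2.1
      have hne2 : z ≠ s v := by
        rintro rfl
        exact flt_irrefl F _ _ hz
      -- z <_v s v
      have hwk : F.wkle v z (s v) :=
        hsf w v z (s v) hvz (Or.inl ⟨acc_of_lt_right F hvz, acc_of_lt_right F hz,
          flt_asymm F hz⟩)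
      have hzsv : F.lt v z (s v) :=
        (ftotal F hwk.1 hwk.2.1 hne2).resolve_right hwk.2.2
      have hvvz : F.lt v v z := haccvz.resolve_left hzv
      rcases hle z hvvz with heq | hcon
      · rw [heq] at hz
        exact flt_irrefl F _ _ hz
      · exact flt_irrefl F v z (F.trans v z (s v) z hzsv hcon)

private lemma alpha_inj : Function.Injective (alphaSeq s) := by
  intro u v h
  have := congrFun h 0
  simpa [alphaSeq] using this

private lemma tail_alpha (w : W) (n : ℕ) :
    seqTail (alphaSeq s w) n = alphaSeq s (alphaSeq s w n) := by
  funext m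
  simp [seqTail, alphaSeq, ← Function.iterate_add_apply, Nat.add_comm]

private lemma lt_iff_least (hs : ∀ w, F.SuccRel w (s w)) (hsf : SemiFlat F)
    (ht : TransAcc F) (hanc : Ancestral F) (w x y : W) :
    F.lt w x y ↔ ∃ m n : ℕ, IsLeast {k | alphaSeq s w k = x} m ∧
      IsLeast {k | alphaSeq s w k = y} n ∧ m < n := by
  classical
  constructor
  · intro h
    have hx : ∃ k, alphaSeq s w k = x := by
      obtain ⟨n, hn⟩ := (acc_iff_alpha F hs ht hanc w x).1 (acc_of_lt_left F h)
      exact ⟨n, hn.symm⟩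
    have hy : ∃ k, alphaSeq s w k = y := by
      obtain ⟨n, hn⟩ := (acc_iff_alpha F hs ht hanc w y).1 (acc_of_lt_right F h)
      exact ⟨n, hn.symm⟩
    refine ⟨Nat.find hx, Nat.find hy, ⟨Nat.find_spec hx, fun k hk => Nat.find_min' hx hk⟩,
      ⟨Nat.find_spec hy, fun k hk => Nat.find_min' hy hk⟩, ?_⟩
    have hyy : alphaSeq s w (Nat.find hy) = y := Nat.find_spec hy
    have h' : F.lt w x (alphaSeq s w (Nat.find hy)) := by rw [hyy]; exact h
    obtain ⟨m, hm, he⟩ := occ_before F hs hsf ht w (Nat.find hy) x h'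
    exact lt_of_le_of_lt (Nat.find_min' hx he) hm
  · rintro ⟨m, n, hm, hn, hmn⟩
    have hx : F.acc w x := hm.1 ▸ acc_alpha F hs ht w m
    have hy : F.acc w y := hn.1 ▸ acc_alpha F hs ht w n
    have hne : x ≠ y := by
      rintro rfl
      exact absurd (hm.unique hn) (Nat.ne_of_lt hmn)
    rcases ftotal F hx hy hne with h | h
    · exact h
    · exfalso
      obtain ⟨k, hk, he⟩ := occ_before F hs hsf ht w m y (hm.1 ▸ h)
      exact absurd (lt_of_le_of_lt (hn.2 he) hk) (Nat.lt_asymm hmn)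

end AuxLemmas

/-- every flat ancestral order frame (W,<) is isomorphic to an
ω-sequence frame via the map sending each world to its successor-sequence α_w:
the map is injective, its image is closed under tailhood, u ∈ R(w) iff α_u is a
tail of α_w, x <_w y iff the rank of the first occurrence of x in α_w is less than
that of y, and the frame order corresponds to the tail order on the α-sequences. -/
theorem flat_ancestral_iso_omega_frame {W : Type} (F : OrderFrame W)
    (hflat : Flat F) (hanc : Ancestral F)
    (s : W → W) (hs : ∀ w, F.SuccRel w (s w)) :
    Function.Injective (alphaSeq s) ∧
    (∀ (w : W) (n : ℕ), ∃ u : W, seqTail (alphaSeq s w) n = alphaSeq s u) ∧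
    (∀ w u : W, F.acc w u ↔ ∃ n : ℕ, alphaSeq s u = seqTail (alphaSeq s w) n) ∧
    (∀ w x y : W, F.lt w x y ↔
      ∃ m n : ℕ, IsLeast {k | alphaSeq s w k = x} m ∧
        IsLeast {k | alphaSeq s w k = y} n ∧ m < n) ∧
    (∀ w x y : W, F.lt w x y ↔
      TailLt (alphaSeq s w) (alphaSeq s x) (alphaSeq s y)) := by
  obtain ⟨hsf, ht⟩ := hflat
  refine ⟨alpha_inj, ?_, ?_, fun w x y => lt_iff_least F hs hsf ht hanc w x y, ?_⟩
  · intro w n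
    exact ⟨alphaSeq s w n, tail_alpha w n⟩
  · intro w u
    rw [acc_iff_alpha F hs ht hanc]
    constructor
    · rintro ⟨n, rfl⟩
      exact ⟨n, (tail_alpha w n).symm⟩
    · rintro ⟨n, h⟩
      exact ⟨n, alpha_inj (h.trans (tail_alpha w n))⟩
  · intro w x y
    have hset : ∀ z : W, {k | seqTail (alphaSeq s w) k = alphaSeq s z} = {k | alphaSeq s w k = z} := by
      intro z
      ext k
      rw [Set.mem_setOf_eq, Set.mem_setOf_eq, tail_alpha]
      exact ⟨fun h => alpha_inj h, fun h => by rw [h]⟩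
    rw [lt_iff_least F hs hsf ht hanc, TailLt, hset x, hset y]
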